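/- For even N = 2q (q ≥ 1) and m ≥ 2, the semi-conjugacy identity (−T_{m,0}) ∘ T_{2q, −π/m} = T_{2q, 0} ∘ (−T_{m,0}) holds on [−1,1], and moreover both sides equal T_{2qm, 0}; here T_{N,a}(x) = cos(N·arccos x + a). -/

import Mathlib

open Real

private lemma cos_nmul_arccos_cos (n : ℕ) (ψ : ℝ) :
    Real.cos ((n : ℝ) * Real.arccos (Real.cos ψ)) = Real.cos ((n : ℝ) * ψ) := by
  have h1 : (Polynomial.Chebyshev.T ℝ (n : ℤ)).eval (Real.cos (Real.arccos (Real.cos ψ)))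
      = Real.cos ((n : ℤ) * Real.arccos (Real.cos ψ)) :=
    Polynomial.Chebyshev.T_real_cos _ _
  have h2 : (Polynomial.Chebyshev.T ℝ (n : ℤ)).eval (Real.cos ψ) = Real.cos ((n : ℤ) * ψ) :=
    Polynomial.Chebyshev.T_real_cos _ _
  rw [Real.cos_arccos (Real.neg_one_le_cos ψ) (Real.cos_le_one ψ)] at h1
  rw [h2] at h1
  push_cast at h1
  exact h1.symm

/-- Semi-conjugacy identity for even-order shifted Chebyshev maps: with
`T_{N,a}(x) = cos (N arccos x + a)`, for `N = 2q` and `m ≥ 2`,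
`(-T_{m,0}) ∘ T_{2q,-π/m} = T_{2q,0} ∘ (-T_{m,0})` on `[-1,1]`, and both sides
equal `T_{2qm,0}`. -/
theorem shifted_chebyshev_semiconjugacy_even (q m : ℕ) (hq : 1 ≤ q) (hm : 2 ≤ m)
    (x : ℝ) (hx : x ∈ Set.Icc (-1 : ℝ) 1) :
    let T : ℕ → ℝ → ℝ → ℝ := fun N a y => Real.cos ((N : ℝ) * Real.arccos y + a)
    (-(T m 0 (T (2 * q) (-(π / m)) x)) = T (2 * q) 0 (-(T m 0 x)) ∧
      -(T m 0 (T (2 * q) (-(π / m)) x)) = T (2 * q * m) 0 x ∧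
      T (2 * q) 0 (-(T m 0 x)) = T (2 * q * m) 0 x) := by
  intro T
  set θ := Real.arccos x with hθ
  have hm0 : (m : ℝ) ≠ 0 := by
    have : 0 < m := by omega
    exact_mod_cast this.ne'
  have e1 : -(T m 0 (T (2 * q) (-(π / m)) x)) = Real.cos (2 * q * m * θ) := by
    simp only [T, add_zero]
    rw [← sub_eq_add_neg]
    rw [cos_nmul_arccos_cos m (((2 * q : ℕ) : ℝ) * θ - π / m)]
    rw [show (m : ℝ) * (((2 * q : ℕ) : ℝ) * θ - π / m) = 2 * q * m * θ - π by
      field_simp; push_cast; ring]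
    rw [Real.cos_sub_pi, neg_neg]
  have e2 : T (2 * q) 0 (-(T m 0 x)) = Real.cos (2 * q * m * θ) := by
    simp only [T, add_zero]
    rw [show -Real.cos ((m : ℝ) * θ) = Real.cos ((m : ℝ) * θ + π) by
      rw [Real.cos_add_pi]]
    rw [cos_nmul_arccos_cos (2 * q) ((m : ℝ) * θ + π)]
    rw [show ((2 * q : ℕ) : ℝ) * ((m : ℝ) * θ + π) = 2 * q * m * θ + q * (2 * π) by
      push_cast; ring]
    rw [Real.cos_add_nat_mul_two_pi]
  have e3 : T (2 * q * m) 0 x = Real.cos (2 * q * m * θ) := by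
    simp only [T, add_zero]
    push_cast
    ring_nf
    rfl
  exact ⟨e1.trans e2.symm, e1.trans e3.symm, e2.trans e3.symm⟩
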